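/- Let F : E × E → E be a coordinate retraction family that is C² on a neighborhood of (0, 0). Then for every K > 0 there exist constants C > 0 and ε > 0 such that for all u, δ, w ∈ E with ‖u‖ ≤ ε, ‖δ‖ ≤ K‖u‖², ‖w‖ ≤ ε and F(δ, w) = u, one has ‖w − u‖ ≤ C‖u‖². (That is, the inverse retraction of the point with normal coordinate u, taken at a base point δ that is second-order close to the origin, equals u up to a second-order error.) -/

import Mathlib

set_option maxHeartbeats 1600000 in
/-- **The inverse retraction at a near-midpoint base is second-order accurate.**
If `F` is a coordinate retraction family that is `C²` near `(0, 0)`, `δ` is a base point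
with `‖δ‖ ≤ K ‖u‖²`, and `w` is the inverse retraction of the point with normal coordinate
`u` at base `δ` (i.e. `F (δ, w) = u`), then `‖w - u‖ ≤ C ‖u‖²`. -/
theorem inverse_retraction_near_midpoint_second_order
    {E : Type*} [NormedAddCommGroup E] [InnerProductSpace ℝ E] [FiniteDimensional ℝ E]
    (F : E × E → E)
    (hF : ContDiffAt ℝ 2 F (0, 0))
    (hF0 : ∀ᶠ z in nhds (0 : E), F (z, 0) = z)
    (hFid : fderiv ℝ (fun ζ : E => F (0, ζ)) 0 = ContinuousLinearMap.id ℝ E) :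
    ∀ K > 0, ∃ C > 0, ∃ ε > 0, ∀ u δ w : E,
      ‖u‖ ≤ ε → ‖δ‖ ≤ K * ‖u‖ ^ 2 → ‖w‖ ≤ ε → F (δ, w) = u →
      ‖w - u‖ ≤ C * ‖u‖ ^ 2 := by
  intro K hK
  have hF00 : F (0, 0) = 0 := hF0.self_of_nhds
  have hFdiff : DifferentiableAt ℝ F ((0 : E), (0 : E)) := hF.differentiableAt (by norm_num)
  set D := fderiv ℝ F ((0 : E), (0 : E)) with hDdef
  -- D (0, w) = w
  have hD0w : ∀ v : E, D (0, v) = v := by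
    intro v
    have h1 : HasFDerivAt (fun ζ : E => ((0 : E), ζ)) (ContinuousLinearMap.inr ℝ E E) 0 :=
      (ContinuousLinearMap.inr ℝ E E).hasFDerivAt
    have h2 : HasFDerivAt (fun ζ : E => F (0, ζ))
        (D.comp (ContinuousLinearMap.inr ℝ E E)) 0 := by
      have := (hFdiff.hasFDerivAt).comp (0 : E) h1
      exact this
    have h3 : D.comp (ContinuousLinearMap.inr ℝ E E) = ContinuousLinearMap.id ℝ E := by
      rw [← h2.fderiv, hFid]
    have := congrArg (fun T : E →L[ℝ] E => T v) h3
    simpa using this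
  -- Lipschitz bound on the derivative near (0,0)
  have hder : ContDiffAt ℝ 1 (fderiv ℝ F) ((0 : E), (0 : E)) := hF.fderiv_right (by norm_num)
  obtain ⟨L, t, ht, hlip⟩ := hder.exists_lipschitzOnWith
  obtain ⟨s, hs, hFs⟩ := hF.contDiffOn (m := 1) (by norm_num) (by simp)
  obtain ⟨ρ₁, hρ₁, hball₁⟩ := Metric.mem_nhds_iff.1 ht
  obtain ⟨ρ₂, hρ₂, hball₂⟩ := Metric.mem_nhds_iff.1 hs
  set ρ : ℝ := min ρ₁ ρ₂ / 2 with hρdef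
  have hρ : 0 < ρ := by positivity
  have hρlt₁ : ρ < ρ₁ := by
    have : min ρ₁ ρ₂ ≤ ρ₁ := min_le_left _ _
    have h0 : 0 < min ρ₁ ρ₂ := lt_min hρ₁ hρ₂
    simp only [hρdef]; linarith
  have hρlt₂ : ρ < ρ₂ := by
    have : min ρ₁ ρ₂ ≤ ρ₂ := min_le_right _ _
    have h0 : 0 < min ρ₁ ρ₂ := lt_min hρ₁ hρ₂
    simp only [hρdef]; linarith
  set M : ℝ := ‖D‖ with hMdef
  have hM : 0 ≤ M := by rw [hMdef]; exact norm_nonneg D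
  set Lr : ℝ := (L : ℝ) with hLdef
  have hL0 : 0 ≤ Lr := L.coe_nonneg
  -- choose ε
  set ε : ℝ := min ρ (min (1 / ((K + 1) * (M + 1))) (1 / (4 * (Lr + 1)))) with hεdef
  have hε : 0 < ε := by
    apply lt_min hρ
    apply lt_min <;> positivity
  have hερ : ε ≤ ρ := min_le_left _ _
  have hεa : ε * ((K + 1) * (M + 1)) ≤ 1 := by
    have h : ε ≤ 1 / ((K + 1) * (M + 1)) :=
      le_trans (min_le_right ρ _) (min_le_left _ _)
    have hpos : (0 : ℝ) < (K + 1) * (M + 1) := by positivity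
    exact (le_div_iff₀ hpos).mp h
  have hεb : Lr * ε ≤ 1 / 4 := by
    have h : ε ≤ 1 / (4 * (Lr + 1)) :=
      le_trans (min_le_right ρ _) (min_le_right _ _)
    have hpos : (0 : ℝ) < 4 * (Lr + 1) := by positivity
    have h2 := (le_div_iff₀ hpos).mp h
    nlinarith [hε.le]
  clear_value D M Lr ε ρ
  refine ⟨16 * Lr + M * K + 1, by nlinarith [mul_nonneg hM hK.le], ε, hε, ?_⟩
  intro u δ w hu hδ hw hFuw
  have hu0 : 0 ≤ ‖u‖ := norm_nonneg u
  have hδ0 : 0 ≤ ‖δ‖ := norm_nonneg δ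
  have hw0 : 0 ≤ ‖w‖ := norm_nonneg w
  -- ‖δ‖ ≤ ‖u‖ and M * ‖δ‖ ≤ ‖u‖
  have hKε : K * ε ≤ 1 := by nlinarith [hε.le, mul_nonneg hM hε.le, mul_nonneg hK.le hε.le]
  have hMKε : M * (K * ε) ≤ 1 := by
    nlinarith [hε.le, mul_nonneg hM hε.le, mul_nonneg hK.le hε.le,
      mul_nonneg (mul_nonneg hM hK.le) hε.le]
  have hδu : ‖δ‖ ≤ ‖u‖ := by nlinarith
  have hMδu : M * ‖δ‖ ≤ ‖u‖ := by
    have h1 : M * ‖δ‖ ≤ M * (K * ‖u‖ ^ 2) := mul_le_mul_of_nonneg_left hδ hM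
    have h2 := mul_le_mul_of_nonneg_left hu (mul_nonneg (mul_nonneg hM hK.le) hu0)
    have h3 := mul_le_mul_of_nonneg_right hMKε hu0
    nlinarith [h1, h2, h3]
  -- the point (δ, w) and the radius r
  set p : E × E := (δ, w) with hpdef
  set r : ℝ := ‖p‖ with hrdef
  have hr0 : 0 ≤ r := norm_nonneg _
  have hrmax : r = max ‖δ‖ ‖w‖ := rfl
  have hrε : r ≤ ε := by
    rw [hrmax]
    exact max_le (hδu.trans hu) hw
  have hrsum : r ≤ ‖δ‖ + ‖w‖ := by
    rw [hrmax]; exact max_le (by linarith) (by linarith)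
  -- mean value estimate on the closed ball of radius r
  have hsub : Metric.closedBall (0 : E × E) r ⊆ Metric.ball (0 : E × E) ρ₁ := fun z hz => by
    simp only [Metric.mem_closedBall, Metric.mem_ball] at hz ⊢
    calc dist z 0 ≤ r := hz
      _ ≤ ρ := hrε.trans hερ
      _ < ρ₁ := hρlt₁
  have hsub₂ : Metric.closedBall (0 : E × E) r ⊆ Metric.ball (0 : E × E) ρ₂ := fun z hz => by
    simp only [Metric.mem_closedBall, Metric.mem_ball] at hz ⊢
    calc dist z 0 ≤ r := hz
      _ ≤ ρ := hrε.trans hερ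
      _ < ρ₂ := hρlt₂
  have hdiffAt : ∀ z ∈ Metric.closedBall (0 : E × E) r, DifferentiableAt ℝ F z := by
    intro z hz
    have hz₂ : z ∈ Metric.ball (0 : E × E) ρ₂ := hsub₂ hz
    have hsnz : s ∈ nhds z :=
      Filter.mem_of_superset (Metric.isOpen_ball.mem_nhds hz₂) hball₂
    exact ((hFs.differentiableOn one_ne_zero).differentiableAt hsnz)
  have h0mem : (0 : E × E) ∈ Metric.closedBall (0 : E × E) r := by
    simp [hr0]
  have hpmem : p ∈ Metric.closedBall (0 : E × E) r := by
    simp [Metric.mem_closedBall, hrdef]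
  have hbound : ∀ z ∈ Metric.closedBall (0 : E × E) r,
      ‖fderiv ℝ F z - D‖ ≤ Lr * r := by
    intro z hz
    have hz₁ : z ∈ t := hball₁ (hsub hz)
    have h0₁ : ((0 : E), (0 : E)) ∈ t := hball₁ (by
      simp only [Metric.mem_ball]
      simpa using hρ₁)
    have := hlip.dist_le_mul z hz₁ ((0 : E), (0 : E)) h0₁
    rw [dist_eq_norm] at this
    have hz' : dist z (0 : E × E) ≤ r := Metric.mem_closedBall.1 hz
    rw [dist_eq_norm, sub_zero] at hz'
    calc ‖fderiv ℝ F z - D‖ = ‖fderiv ℝ F z - fderiv ℝ F ((0:E),(0:E))‖ := by rw [hDdef]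
      _ ≤ Lr * dist z ((0:E),(0:E)) := by rw [hLdef]; exact this
      _ ≤ Lr * r := by
          rw [dist_eq_norm, Prod.mk_zero_zero, sub_zero]
          exact mul_le_mul_of_nonneg_left hz' hL0
  have hmvt := (convex_closedBall (0 : E × E) r).norm_image_sub_le_of_norm_fderiv_le'
    hdiffAt hbound h0mem hpmem
  -- simplify the mean value estimate
  have hDp : D p = D (δ, 0) + w := by
    have : p = ((δ, 0) : E × E) + ((0, w) : E × E) := by simp [hpdef, Prod.ext_iff]
    rw [this, map_add, hD0w]
  have hkey : ‖u - (D (δ, 0) + w)‖ ≤ Lr * r ^ 2 := by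
    have h1 : ‖F p - F (0, 0) - D (p - 0)‖ ≤ Lr * r * ‖p - 0‖ := hmvt
    rw [sub_zero] at h1
    rw [hF00, hFuw, sub_zero, hDp] at h1
    calc ‖u - (D (δ, 0) + w)‖ ≤ Lr * r * ‖p‖ := h1
      _ = Lr * r ^ 2 := by rw [← hrdef]; ring
  have hDδ : ‖D (δ, 0)‖ ≤ M * ‖δ‖ := by
    calc ‖D (δ, 0)‖ ≤ M * ‖((δ, 0) : E × E)‖ := by rw [hMdef]; exact D.le_opNorm _
      _ = M * ‖δ‖ := by
          congr 1
          simp [Prod.norm_def, norm_nonneg]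
  have hwu : ‖w - u‖ ≤ Lr * r ^ 2 + M * ‖δ‖ := by
    have heq : w - u = -(u - (D (δ, 0) + w)) - D (δ, 0) := by abel
    calc ‖w - u‖ = ‖-(u - (D (δ, 0) + w)) - D (δ, 0)‖ := by rw [heq]
      _ ≤ ‖-(u - (D (δ, 0) + w))‖ + ‖D (δ, 0)‖ := norm_sub_le _ _
      _ = ‖u - (D (δ, 0) + w)‖ + ‖D (δ, 0)‖ := by rw [norm_neg]
      _ ≤ Lr * r ^ 2 + M * ‖δ‖ := add_le_add hkey hDδ
  -- bootstrap: ‖w‖ ≤ 3‖u‖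
  have hQ : Lr * r ^ 2 ≤ (1 / 4) * (‖δ‖ + ‖w‖) := by nlinarith
  have hwtri : ‖w‖ ≤ ‖u‖ + ‖w - u‖ := by
    have := norm_sub_norm_le w u
    have h2 := abs_le.1 (abs_norm_sub_norm_le w u)
    linarith [h2.1]
  have hw3 : ‖w‖ ≤ 3 * ‖u‖ := by linarith
  have hr4 : r ≤ 4 * ‖u‖ := by linarith
  -- final estimate
  have hr16 : r ^ 2 ≤ 16 * ‖u‖ ^ 2 := by nlinarith [mul_self_le_mul_self hr0 hr4]
  have hLr16 : Lr * r ^ 2 ≤ 16 * Lr * ‖u‖ ^ 2 := by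
    nlinarith [mul_le_mul_of_nonneg_left hr16 hL0]
  have hMδK : M * ‖δ‖ ≤ M * K * ‖u‖ ^ 2 := by nlinarith
  calc ‖w - u‖ ≤ Lr * r ^ 2 + M * ‖δ‖ := hwu
    _ ≤ 16 * Lr * ‖u‖ ^ 2 + M * K * ‖u‖ ^ 2 := add_le_add hLr16 hMδK
    _ ≤ (16 * Lr + M * K + 1) * ‖u‖ ^ 2 := by nlinarith
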